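/- Let x, e ∈ R^n_{>0} be such that M = (E + L)X is strictly RCDD, where L is a directed Laplacian, E = diag(e), X = diag(x). Let g ∈ R^n_{>0} with ||g||₁ = 1. Then x* := X M⁻¹ g is entrywise positive and (E − g eᵀ + L) diag(x*) is an Eulerian Laplacian. -/

import Mathlib

open Matrix Finset

/-- `L` is a directed Laplacian: nonpositive off-diagonal entries and zero column sums. -/
def IsDirLaplacian {n : ℕ} (L : Matrix (Fin n) (Fin n) ℝ) : Prop :=
  (∀ i j, i ≠ j → L i j ≤ 0) ∧ (∀ j, ∑ i, L i j = 0)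

/-- `L` is an Eulerian directed Laplacian: additionally all row sums vanish. -/
def IsEulerianLaplacian {n : ℕ} (L : Matrix (Fin n) (Fin n) ℝ) : Prop :=
  IsDirLaplacian L ∧ (∀ i, ∑ j, L i j = 0)

/-- `M` is strictly RCDD: it is `α`-row and column diagonally dominant for some `α > 0`. -/
def IsStrictlyRCDD {n : ℕ} (M : Matrix (Fin n) (Fin n) ℝ) : Prop :=
  ∃ α : ℝ, 0 < α ∧
    (∀ i, (1 + α) * ∑ j ∈ Finset.univ.erase i, |M i j| ≤ M i i) ∧
    (∀ i, (1 + α) * ∑ j ∈ Finset.univ.erase i, |M j i| ≤ M i i)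

/-- If `M = (E + L) X` is strictly RCDD with `x, e > 0`, and `g > 0` with `‖g‖₁ = 1`,
then `x* = X M⁻¹ g` is entrywise positive and `(E - g eᵀ + L) diag(x*)` is an Eulerian
Laplacian. -/
theorem exact_rescaling {n : ℕ} (L : Matrix (Fin n) (Fin n) ℝ) (hL : IsDirLaplacian L)
    (x e g : Fin n → ℝ)
    (hx : ∀ i, 0 < x i) (he : ∀ i, 0 < e i) (hg : ∀ i, 0 < g i) (hg1 : ∑ i, g i = 1)
    (M : Matrix (Fin n) (Fin n) ℝ)
    (hM : M = (Matrix.diagonal e + L) * Matrix.diagonal x)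
    (hrcdd : IsStrictlyRCDD M)
    (xstar : Fin n → ℝ)
    (hxstar : xstar = (Matrix.diagonal x).mulVec (M⁻¹.mulVec g)) :
    (∀ i, 0 < xstar i) ∧
    IsEulerianLaplacian
      ((Matrix.diagonal e - Matrix.of (fun i j => g i * e j) + L) *
        Matrix.diagonal xstar) := by
  obtain ⟨α, hα, hrow, _hcol⟩ := hrcdd
  -- entries of M
  have hMentry : ∀ i j, M i j = (Matrix.diagonal e i j + L i j) * x j := by
    intro i j
    rw [hM, Matrix.mul_diagonal, Matrix.add_apply]
  have hoff : ∀ i j, i ≠ j → M i j ≤ 0 := by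
    intro i j hij
    rw [hMentry i j, Matrix.diagonal_apply_ne _ hij]
    have := hL.1 i j hij
    nlinarith [hx j]
  -- column sums of M
  have hcolsum : ∀ j, ∑ i, M i j = e j * x j := by
    intro j
    have : ∑ i, M i j = (∑ i, (Matrix.diagonal e i j + L i j)) * x j := by
      rw [Finset.sum_mul]; exact Finset.sum_congr rfl fun i _ => hMentry i j
    rw [this, Finset.sum_add_distrib, hL.2 j]
    have : ∑ i, Matrix.diagonal e i j = e j := by
      rw [Finset.sum_eq_single j (fun i _ hij => Matrix.diagonal_apply_ne _ hij)
        (fun h => absurd (Finset.mem_univ j) h)]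
      simp [Matrix.diagonal_apply_eq]
    rw [this]; ring
  -- diagonal of M is positive
  have hdiag : ∀ j, 0 < M j j := by
    intro j
    have h1 : ∑ i, M i j = M j j + ∑ i ∈ Finset.univ.erase j, M i j :=
      (Finset.add_sum_erase _ _ (Finset.mem_univ j)).symm
    have h2 : ∑ i ∈ Finset.univ.erase j, M i j ≤ 0 :=
      Finset.sum_nonpos fun i hi => hoff i j (Finset.ne_of_mem_erase hi)
    have := hcolsum j
    nlinarith [mul_pos (he j) (hx j)]
  -- M is invertible
  have hinj : Function.Injective M.mulVec := by
    intro v w hvw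
    by_contra hne
    set u := v - w with hu
    have hu0 : M.mulVec u = 0 := by
      rw [hu, Matrix.mulVec_sub, hvw, sub_self]
    have hune : u ≠ 0 := by
      intro h; exact hne (sub_eq_zero.mp (by rw [← hu, h]))
    obtain ⟨j₀, hj₀⟩ := Function.ne_iff.mp hune
    obtain ⟨i₀, -, hi₀⟩ := Finset.exists_max_image Finset.univ (fun i => |u i|)
      ⟨j₀, Finset.mem_univ j₀⟩
    have hui₀ : 0 < |u i₀| := lt_of_lt_of_le (abs_pos.mpr hj₀) (hi₀ j₀ (Finset.mem_univ _))
    have h0 : ∑ j, M i₀ j * u j = 0 := congrFun hu0 i₀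
    have hsplit : M i₀ i₀ * u i₀ = -∑ j ∈ Finset.univ.erase i₀, M i₀ j * u j := by
      have := (Finset.add_sum_erase _ (fun j => M i₀ j * u j) (Finset.mem_univ i₀)).symm
      rw [this] at h0; linarith
    have hb : M i₀ i₀ * |u i₀| ≤ (∑ j ∈ Finset.univ.erase i₀, |M i₀ j|) * |u i₀| := by
      calc M i₀ i₀ * |u i₀| = |M i₀ i₀ * u i₀| := by
            rw [abs_mul, abs_of_pos (hdiag i₀)]
        _ = |∑ j ∈ Finset.univ.erase i₀, M i₀ j * u j| := by rw [hsplit, abs_neg]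
        _ ≤ ∑ j ∈ Finset.univ.erase i₀, |M i₀ j * u j| := Finset.abs_sum_le_sum_abs _ _
        _ ≤ ∑ j ∈ Finset.univ.erase i₀, |M i₀ j| * |u i₀| := by
            refine Finset.sum_le_sum fun j _ => ?_
            rw [abs_mul]
            exact mul_le_mul_of_nonneg_left (hi₀ j (Finset.mem_univ _)) (abs_nonneg _)
        _ = (∑ j ∈ Finset.univ.erase i₀, |M i₀ j|) * |u i₀| := by rw [Finset.sum_mul]
    have hS : 0 ≤ ∑ j ∈ Finset.univ.erase i₀, |M i₀ j| :=
      Finset.sum_nonneg fun j _ => abs_nonneg _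
    nlinarith [hrow i₀, hdiag i₀, mul_le_mul_of_nonneg_right (hrow i₀) hui₀.le,
      mul_pos (hdiag i₀) hui₀, mul_nonneg hS hui₀.le, mul_pos hα (mul_pos (hdiag i₀) hui₀)]
  have hunit : IsUnit M := Matrix.mulVec_injective_iff_isUnit.mp hinj
  have hdet : IsUnit M.det := (Matrix.isUnit_iff_isUnit_det M).mp hunit
  set y := M⁻¹.mulVec g with hy
  have hMy : M.mulVec y = g := by
    rw [hy, Matrix.mulVec_mulVec, Matrix.mul_nonsing_inv M hdet, Matrix.one_mulVec]
  -- positivity of y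
  have hypos : ∀ i, 0 < y i := by
    have hne : (Finset.univ : Finset (Fin n)).Nonempty ∨ n = 0 := by
      rcases Nat.eq_zero_or_pos n with h | h
      · exact Or.inr h
      · exact Or.inl ⟨⟨0, h⟩, Finset.mem_univ _⟩
    rcases hne with hne | hn
    · obtain ⟨i₀, -, hi₀⟩ := Finset.exists_min_image Finset.univ y hne
      have hyi₀ : 0 < y i₀ := by
        by_contra hle
        push_neg at hle
        have hgi : g i₀ = ∑ j, M i₀ j * y j := (congrFun hMy i₀).symm
        have hb : ∑ j, M i₀ j * y j ≤ (∑ j, M i₀ j) * y i₀ := by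
          rw [Finset.sum_mul]
          refine Finset.sum_le_sum fun j _ => ?_
          rcases eq_or_ne i₀ j with rfl | hij
          · exact le_refl _
          · exact mul_le_mul_of_nonpos_left (hi₀ j (Finset.mem_univ _)) (hoff i₀ j hij)
        have hRpos : 0 < ∑ j, M i₀ j := by
          have h1 : ∑ j, M i₀ j = M i₀ i₀ + ∑ j ∈ Finset.univ.erase i₀, M i₀ j :=
            (Finset.add_sum_erase _ _ (Finset.mem_univ i₀)).symm
          have h2 : ∑ j ∈ Finset.univ.erase i₀, |M i₀ j|
              = -∑ j ∈ Finset.univ.erase i₀, M i₀ j := by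
            rw [← Finset.sum_neg_distrib]
            exact Finset.sum_congr rfl fun j hj =>
              abs_of_nonpos (hoff i₀ j (Finset.ne_of_mem_erase hj).symm)
          have h3 := hrow i₀
          rw [h2] at h3
          have hS' : ∑ j ∈ Finset.univ.erase i₀, M i₀ j ≤ 0 :=
            Finset.sum_nonpos fun j hj => hoff i₀ j (Finset.ne_of_mem_erase hj).symm
          nlinarith [hdiag i₀, mul_pos hα (hdiag i₀)]
        have := mul_nonpos_of_nonneg_of_nonpos hRpos.le hle
        nlinarith [hg i₀]
      intro i; exact lt_of_lt_of_le hyi₀ (hi₀ i (Finset.mem_univ _))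
    · intro i; exact absurd i.2 (by omega)
  have hxstar' : ∀ i, xstar i = x i * y i := by
    intro i
    rw [hxstar]
    simp [Matrix.mulVec, diagonal_dotProduct, hy]
  have hxspos : ∀ i, 0 < xstar i := fun i => (hxstar' i) ▸ mul_pos (hx i) (hypos i)
  refine ⟨hxspos, ?_⟩
  set A := (Matrix.diagonal e - Matrix.of (fun i j => g i * e j) + L) * Matrix.diagonal xstar
    with hA
  have hAentry : ∀ i j, A i j = (Matrix.diagonal e i j - g i * e j + L i j) * xstar j := by
    intro i j
    rw [hA, Matrix.mul_diagonal, Matrix.add_apply, Matrix.sub_apply, Matrix.of_apply]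
  -- sum e*xstar = 1
  have hS1 : ∑ j, e j * xstar j = 1 := by
    have : ∀ j, e j * xstar j = ∑ i, M i j * y j := by
      intro j
      rw [hxstar' j, ← Finset.sum_mul, hcolsum j]; ring
    calc ∑ j, e j * xstar j = ∑ j, ∑ i, M i j * y j := Finset.sum_congr rfl fun j _ => this j
      _ = ∑ i, ∑ j, M i j * y j := Finset.sum_comm
      _ = ∑ i, g i := Finset.sum_congr rfl fun i _ => (congrFun hMy i : _)
      _ = 1 := hg1
  refine ⟨⟨?_, ?_⟩, ?_⟩
  · -- off-diagonal nonpositive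
    intro i j hij
    rw [hAentry i j, Matrix.diagonal_apply_ne _ hij]
    have h1 : 0 - g i * e j + L i j ≤ 0 := by
      have := hL.1 i j hij
      nlinarith [mul_pos (hg i) (he j)]
    exact mul_nonpos_of_nonpos_of_nonneg h1 (hxspos j).le
  · -- column sums zero
    intro j
    have : ∀ i, A i j = (Matrix.diagonal e i j - g i * e j + L i j) * xstar j :=
      fun i => hAentry i j
    calc ∑ i, A i j
        = (∑ i, (Matrix.diagonal e i j - g i * e j + L i j)) * xstar j := by
          rw [Finset.sum_mul]; exact Finset.sum_congr rfl fun i _ => this i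
      _ = 0 := by
          have hd : ∑ i, Matrix.diagonal e i j = e j := by
            rw [Finset.sum_eq_single j (fun i _ hij => Matrix.diagonal_apply_ne _ hij)
              (fun h => absurd (Finset.mem_univ j) h)]
            simp [Matrix.diagonal_apply_eq]
          have hge : ∑ i, g i * e j = e j := by rw [← Finset.sum_mul, hg1, one_mul]
          have := hL.2 j
          rw [Finset.sum_add_distrib, Finset.sum_sub_distrib, hd, hge, this]
          ring
  · -- row sums zero
    intro i
    have key : ∀ j, A i j = M i j * y j - g i * (e j * xstar j) := by
      intro j
      rw [hAentry i j, hMentry i j, hxstar' j]; ring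
    calc ∑ j, A i j = ∑ j, (M i j * y j - g i * (e j * xstar j)) :=
          Finset.sum_congr rfl fun j _ => key j
      _ = (∑ j, M i j * y j) - g i * ∑ j, e j * xstar j := by
          rw [Finset.sum_sub_distrib, Finset.mul_sum]
      _ = g i - g i * 1 := by
          have hMy' : ∑ j, M i j * y j = g i := congrFun hMy i
          rw [hMy', hS1]
      _ = 0 := by ring
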